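/- Let W be a Hermitian operator on the tripartite space H = H_A ⊗ H_B ⊗ H_C and ψ ∈ H a fixed vector. Then ⟨η, W η⟩ ≥ 0 for all vectors η of the form η = (A ⊗ B ⊗ C)ψ with A, B, C arbitrary linear operators, if and only if ⟨ξ, (W ⊗ |ψ*⟩⟨ψ*|) ξ⟩ ≥ 0 for all product vectors ξ = a ⊗ b ⊗ c with a ∈ H_A ⊗ H_A, b ∈ H_B ⊗ H_B, c ∈ H_C ⊗ H_C (where the tensor factors of the two-copy space are regrouped so that a acts on the pair of A-copies, etc.). -/
import Mathlib


/-- The inner product `∑ i, conj (x i) * y i` (conjugate-linear in the first argument). -/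
noncomputable def inn {ι : Type*} [Fintype ι] (x y : ι → ℂ) : ℂ := ∑ i, star (x i) * y i

/-- Kronecker (tensor) product of three matrices. -/
def kron3 {a b c : ℕ} (A : Matrix (Fin a) (Fin a) ℂ) (B : Matrix (Fin b) (Fin b) ℂ)
    (C : Matrix (Fin c) (Fin c) ℂ) :
    Matrix (Fin a × Fin b × Fin c) (Fin a × Fin b × Fin c) ℂ :=
  fun p q => A p.1 q.1 * B p.2.1 q.2.1 * C p.2.2 q.2.2

/-- Regrouping of a product vector `x ⊗ y ⊗ z` with respect to the split
`(A₁A₂|B₁B₂|C₁C₂)` into a vector on the two-copy space `H ⊗ H`. -/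
def regroup {a b c : ℕ} (x : Fin a × Fin a → ℂ) (y : Fin b × Fin b → ℂ)
    (z : Fin c × Fin c → ℂ) :
    (Fin a × Fin b × Fin c) × (Fin a × Fin b × Fin c) → ℂ :=
  fun p => x (p.1.1, p.2.1) * y (p.1.2.1, p.2.2.1) * z (p.1.2.2, p.2.2.2)

/-- The operator `W ⊗ |ψ*⟩⟨ψ*|` on the two-copy space. -/
def extW {a b c : ℕ} (W : Matrix (Fin a × Fin b × Fin c) (Fin a × Fin b × Fin c) ℂ)
    (ψ : Fin a × Fin b × Fin c → ℂ) :
    Matrix ((Fin a × Fin b × Fin c) × (Fin a × Fin b × Fin c))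
      ((Fin a × Fin b × Fin c) × (Fin a × Fin b × Fin c)) ℂ :=
  fun p q => W p.1 q.1 * (star (ψ p.2) * ψ q.2)

/-- Abstract key identity over an arbitrary finite index type. -/
lemma quad {ι : Type*} [Fintype ι] (K W : Matrix ι ι ℂ) (ψ : ι → ℂ) :
    inn (fun p : ι × ι => K p.1 p.2)
      ((Matrix.of fun p q : ι × ι => W p.1 q.1 * (star (ψ p.2) * ψ q.2)).mulVec
        (fun p : ι × ι => K p.1 p.2)) =
    inn (K.mulVec ψ) (W.mulVec (K.mulVec ψ)) := by
  unfold inn Matrix.mulVec dotProduct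
  simp only [Fintype.sum_prod_type, star_sum, star_mul', Finset.sum_mul, Finset.mul_sum]
  refine Finset.sum_congr rfl fun i _ => ?_
  rw [Finset.sum_comm]
  refine Finset.sum_congr rfl fun k _ => ?_
  rw [Finset.sum_comm]
  refine Finset.sum_congr rfl fun l _ => Finset.sum_congr rfl fun j _ => ?_
  simp only [Matrix.of_apply]
  ring

/-- Key identity: the quadratic form of `W ⊗ |ψ*⟩⟨ψ*|` on the product vector
`x ⊗ y ⊗ z` equals the quadratic form of `W` on `(A ⊗ B ⊗ C) ψ` where
`A i j = x (i,j)` etc. -/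
lemma key {a b c : ℕ}
    (W : Matrix (Fin a × Fin b × Fin c) (Fin a × Fin b × Fin c) ℂ)
    (ψ : Fin a × Fin b × Fin c → ℂ)
    (x : Fin a × Fin a → ℂ) (y : Fin b × Fin b → ℂ) (z : Fin c × Fin c → ℂ) :
    inn (regroup x y z) ((extW W ψ).mulVec (regroup x y z)) =
    inn ((kron3 (fun i j => x (i, j)) (fun i j => y (i, j)) (fun i j => z (i, j))).mulVec ψ)
      (W.mulVec ((kron3 (fun i j => x (i, j)) (fun i j => y (i, j))
        (fun i j => z (i, j))).mulVec ψ)) :=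
  quad (kron3 (fun i j => x (i, j)) (fun i j => y (i, j)) (fun i j => z (i, j))) W ψ

/-- Theorem 1: `⟨η, W η⟩ ≥ 0` for all `η = (A ⊗ B ⊗ C) ψ` iff
`⟨ξ, (W ⊗ |ψ*⟩⟨ψ*|) ξ⟩ ≥ 0` for all product vectors `ξ = a ⊗ b ⊗ c` in the
regrouped two-copy space. -/
theorem stmt2 {a b c : ℕ}
    (W : Matrix (Fin a × Fin b × Fin c) (Fin a × Fin b × Fin c) ℂ)
    (hW : W.IsHermitian) (ψ : Fin a × Fin b × Fin c → ℂ) :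
    (∀ (A : Matrix (Fin a) (Fin a) ℂ) (B : Matrix (Fin b) (Fin b) ℂ)
        (C : Matrix (Fin c) (Fin c) ℂ),
        0 ≤ (inn ((kron3 A B C).mulVec ψ) (W.mulVec ((kron3 A B C).mulVec ψ))).re) ↔
      (∀ (x : Fin a × Fin a → ℂ) (y : Fin b × Fin b → ℂ) (z : Fin c × Fin c → ℂ),
        0 ≤ (inn (regroup x y z) ((extW W ψ).mulVec (regroup x y z))).re) := by
  constructor
  · intro h x y z
    rw [key]
    exact h _ _ _
  · intro h A B C
    have := h (fun p => A p.1 p.2) (fun p => B p.1 p.2) (fun p => C p.1 p.2)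
    rwa [key] at this
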